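/- Let φ : ℝ → [0, +∞] be a lower semicontinuous convex function with nonempty domain contained in [0, +∞) and with φ(1) = 0, let p ∈ M₁ with p_i > 0 for all i, and let λ₀ > 0. Then for every x ∈ ℝ^N, sup_{q ∈ M₁} ( ⟨q, x⟩ − λ₀ D_φ(q, p) ) = min_{μ ∈ ℝ} ( μ + λ₀ Σ_{i=1}^N p_i φ*((x_i − μ)/λ₀) ), and the minimum over μ on the right-hand side is attained. -/

import Mathlib

open scoped BigOperators

/-- Fenchel conjugate of `φ : ℝ → [0,+∞]`: `φ*(s) = sup_t (s·t − φ(t))`, in `EReal`. -/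
noncomputable def fconj (φ : ℝ → EReal) (s : ℝ) : EReal :=
  ⨆ t : ℝ, (((s * t : ℝ)) : EReal) - φ t

/-- `φ`-divergence `D_φ(q, p) = Σ_i p_i φ(q_i / p_i)`, in `[0,+∞]` (as `EReal`). -/
noncomputable def phiDiv {N : ℕ} (φ : ℝ → EReal) (q p : Fin N → ℝ) : EReal :=
  ∑ i, ((p i : ℝ) : EReal) * φ (q i / p i)

namespace S10
lemma coe_sum {ι : Type*} (s : Finset ι) (f : ι → ℝ) :
    ((∑ i ∈ s, f i : ℝ) : EReal) = ∑ i ∈ s, ((f i : ℝ) : EReal) := by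
  classical
  induction s using Finset.induction with
  | empty => simp
  | @insert _ _ h ih => rw [Finset.sum_insert h, Finset.sum_insert h, ← ih, EReal.coe_add]
variable {N : ℕ}
noncomputable def Dr (φ : ℝ → EReal) (p q : Fin N → ℝ) : ℝ :=
  ∑ i, p i * (φ (q i / p i)).toReal
noncomputable def obj (φ : ℝ → EReal) (p x : Fin N → ℝ) (lam0 : ℝ) (q : Fin N → ℝ) : ℝ :=
  (∑ i, q i * x i) - lam0 * Dr φ p q
variable {φ : ℝ → EReal} {p x q : Fin N → ℝ} {lam0 : ℝ}
lemma phi_ne_bot (hφpos : ∀ t, 0 ≤ φ t) (t : ℝ) : φ t ≠ ⊥ := by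
  intro hb; have := hφpos t; rw [hb] at this; simp at this
lemma toReal_nn (hφpos : ∀ t, 0 ≤ φ t) (t : ℝ) : 0 ≤ (φ t).toReal := by
  rcases eq_or_ne (φ t) ⊤ with h | h
  · simp [h]
  · have h2 := EReal.coe_toReal h (phi_ne_bot hφpos t)
    have := hφpos t; rw [← h2] at this; exact_mod_cast this
lemma phi_coe (hφpos : ∀ t, 0 ≤ φ t) {t : ℝ} (h : φ t ≠ ⊤) :
    φ t = (((φ t).toReal : ℝ) : EReal) := (EReal.coe_toReal h (phi_ne_bot hφpos t)).symm
lemma phiDiv_top_of (hppos : ∀ i, 0 < p i) (hφpos : ∀ t, 0 ≤ φ t) {i : Fin N}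
    (h : φ (q i / p i) = ⊤) : phiDiv φ q p = ⊤ := by
  refine top_le_iff.mp ?_
  have hterm : ((p i : ℝ) : EReal) * φ (q i / p i) = ⊤ := by
    rw [h]; exact EReal.coe_mul_top_of_pos (hppos i)
  rw [← hterm]
  exact Finset.single_le_sum
    (f := fun j => ((p j : ℝ) : EReal) * φ (q j / p j))
    (fun j _ => mul_nonneg (by exact_mod_cast (hppos j).le) (hφpos _)) (Finset.mem_univ i)
lemma ne_top_each (hppos : ∀ i, 0 < p i) (hφpos : ∀ t, 0 ≤ φ t)
    (h : phiDiv φ q p ≠ ⊤) (i : Fin N) : φ (q i / p i) ≠ ⊤ :=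
  fun ht => h (phiDiv_top_of hppos hφpos ht)
lemma q_nonneg (hφdom_sub : {t : ℝ | φ t ≠ ⊤} ⊆ Set.Ici (0 : ℝ))
    (hppos : ∀ i, 0 < p i) (hφpos : ∀ t, 0 ≤ φ t)
    (h : phiDiv φ q p ≠ ⊤) (i : Fin N) : 0 ≤ q i := by
  have h1 : 0 ≤ q i / p i := hφdom_sub (ne_top_each hppos hφpos h i)
  have h2 := mul_nonneg h1 (hppos i).le
  rwa [div_mul_cancel₀ _ (hppos i).ne'] at h2
lemma phiDiv_coe (hφpos : ∀ t, 0 ≤ φ t) (h : ∀ i, φ (q i / p i) ≠ ⊤) :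
    phiDiv φ q p = ((Dr φ p q : ℝ) : EReal) := by
  rw [phiDiv, Dr, coe_sum]
  exact Finset.sum_congr rfl fun i _ => by rw [EReal.coe_mul, ← phi_coe hφpos (h i)]
lemma Dr_nonneg (hφpos : ∀ t, 0 ≤ φ t) (hppos : ∀ i, 0 < p i) : 0 ≤ Dr φ p q :=
  Finset.sum_nonneg fun i _ => mul_nonneg (hppos i).le (toReal_nn hφpos _)
lemma phi_move (hφpos : ∀ t, 0 ≤ φ t)
    (hφconv : ∀ t₁ t₂ : ℝ, ∀ u : ℝ, 0 < u → u < 1 →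
      φ (u * t₁ + (1 - u) * t₂) ≤ (u : EReal) * φ t₁ + ((1 - u : ℝ) : EReal) * φ t₂)
    (hφ1 : φ 1 = 0) (t θ : ℝ) (h0 : 0 ≤ θ) (h1 : θ ≤ 1) :
    φ ((1 - θ) * t + θ) ≤ φ t := by
  rcases eq_or_ne (φ t) ⊤ with htop | hfin
  · rw [htop]; exact le_top
  rcases h0.eq_or_lt with rfl | h0'
  · norm_num
  rcases h1.eq_or_lt with rfl | h1'
  · have harg : (1 - (1 : ℝ)) * t + 1 = 1 := by ring
    rw [harg, hφ1]; exact hφpos t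
  · have h := hφconv t 1 (1 - θ) (by linarith) (by linarith)
    have harg : (1 - θ) * t + (1 - (1 - θ)) * 1 = (1 - θ) * t + θ := by ring
    have hco : (1 - (1 - θ) : ℝ) = θ := by ring
    rw [harg, hco, hφ1, mul_zero, add_zero] at h
    refine h.trans ?_
    have hr := phi_coe hφpos hfin
    set r := (φ t).toReal with hrdef
    have hrnn : 0 ≤ r := toReal_nn hφpos t
    rw [hr, ← EReal.coe_mul, EReal.coe_le_coe_iff]
    nlinarith

section main
variable (hφpos : ∀ t, 0 ≤ φ t)
  (hφconv : ∀ t₁ t₂ : ℝ, ∀ u : ℝ, 0 < u → u < 1 →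
      φ (u * t₁ + (1 - u) * t₂) ≤ (u : EReal) * φ t₁ + ((1 - u : ℝ) : EReal) * φ t₂)
  (hφdom_sub : {t : ℝ | φ t ≠ ⊤} ⊆ Set.Ici (0 : ℝ))
  (hφ1 : φ 1 = 0)
  (hpsum : ∑ i, p i = 1) (hppos : ∀ i, 0 < p i)
  (hlam0 : 0 < lam0)
  {Sr M : ℝ}
  (hub : ∀ q : Fin N → ℝ, phiDiv φ q p ≠ ⊤ → ∑ i, q i = 1 → obj φ p x lam0 q ≤ Sr)
  (hM : ∀ i, |x i| ≤ M)

include hφpos hφconv hφdom_sub hφ1 hpsum hppos hlam0 hub hM in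
lemma slope_up (q : Fin N → ℝ) (hFe : phiDiv φ q p ≠ ⊤) (hc : 1 ≤ ∑ i, q i) :
    obj φ p x lam0 q ≤ Sr + M * ((∑ i, q i) - 1) := by
  classical
  set c := ∑ i, q i with hc_def
  have hnet : ∀ i, φ (q i / p i) ≠ ⊤ := ne_top_each hppos hφpos hFe
  set m : Fin N → ℝ := fun i => max (q i / p i - 1) 0 with hm
  have hmnn : ∀ i, 0 ≤ m i := fun i => le_max_right _ _
  set σ := ∑ i, p i * m i with hσdef
  have hσ1 : c - 1 ≤ σ := by
    have h1 : ∀ i, p i * (q i / p i - 1) = q i - p i := fun i => by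
      rw [mul_sub, mul_div_cancel₀ _ (hppos i).ne', mul_one]
    have h2 : c - 1 = ∑ i, p i * (q i / p i - 1) := by
      rw [Finset.sum_congr rfl fun i _ => h1 i, Finset.sum_sub_distrib, hpsum, hc_def]
    rw [h2]
    exact Finset.sum_le_sum fun i _ =>
      mul_le_mul_of_nonneg_left (le_max_left _ _) (hppos i).le
  rcases hc.eq_or_lt with h1 | h1
  · have := hub q hFe h1.symm
    rw [← h1]
    simpa using this
  have hσpos : 0 < σ := lt_of_lt_of_le (by linarith) hσ1
  set θ := (c - 1) / σ with hθdef
  have hθ0 : 0 < θ := div_pos (by linarith) hσpos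
  have hθ1 : θ ≤ 1 := (div_le_one hσpos).mpr hσ1
  have hθσ : θ * σ = c - 1 := div_mul_cancel₀ _ hσpos.ne'
  set q' : Fin N → ℝ := fun i => q i - θ * (p i * m i) with hq'
  have hsum' : ∑ i, q' i = 1 := by
    rw [hq']
    rw [Finset.sum_sub_distrib, ← Finset.mul_sum, ← hσdef, ← hc_def, hθσ]
    ring
  have key : ∀ i, φ (q' i / p i) ≤ φ (q i / p i) ∧ 0 ≤ q' i := by
    intro i
    have hteq : q' i / p i = q i / p i - θ * m i := by
      simp only [hq']
      rw [sub_div, mul_comm (p i) (m i), ← mul_assoc, mul_div_assoc,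
        div_self (hppos i).ne', mul_one]
    rcases le_or_gt (q i / p i) 1 with h | h
    · have hm0 : m i = 0 := max_eq_right (by linarith)
      have hqq : q' i = q i := by simp only [hq', hm0]; ring
      constructor
      · rw [hteq, hm0, mul_zero, sub_zero]
      · rw [hqq]; exact q_nonneg hφdom_sub hppos hφpos hFe i
    · have hm0 : m i = q i / p i - 1 := max_eq_left (by linarith)
      have harg : q' i / p i = (1 - θ) * (q i / p i) + θ := by rw [hteq, hm0]; ring
      refine ⟨by rw [harg]; exact phi_move hφpos hφconv hφ1 _ θ hθ0.le hθ1, ?_⟩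
      have hval : q' i = p i * ((1 - θ) * (q i / p i) + θ) := by
        rw [← harg, mul_comm]
        exact (div_mul_cancel₀ _ (hppos i).ne').symm
      rw [hval]
      have ht0 : 0 ≤ q i / p i := hφdom_sub (hnet i)
      have : 0 ≤ (1 - θ) * (q i / p i) + θ := by nlinarith
      exact mul_nonneg (hppos i).le this
  have hnet' : ∀ i, φ (q' i / p i) ≠ ⊤ := fun i ht =>
    hnet i (top_le_iff.mp (ht ▸ (key i).1))
  have hFe' : phiDiv φ q' p ≠ ⊤ := by
    rw [phiDiv_coe hφpos hnet']; exact EReal.coe_ne_top _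
  have hDr : Dr φ p q' ≤ Dr φ p q := by
    refine Finset.sum_le_sum fun i _ => mul_le_mul_of_nonneg_left ?_ (hppos i).le
    exact EReal.toReal_le_toReal (key i).1 (phi_ne_bot hφpos _) (hnet i)
  have hip : ∑ i, q i * x i ≤ (∑ i, q' i * x i) + M * (c - 1) := by
    have h2 : ∑ i, (q i * x i - q' i * x i) = θ * ∑ i, (p i * m i) * x i := by
      rw [Finset.mul_sum]
      exact Finset.sum_congr rfl fun i _ => by rw [hq']; ring
    have h3 : ∑ i, (p i * m i) * x i ≤ σ * M := by
      rw [hσdef, Finset.sum_mul]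
      refine Finset.sum_le_sum fun i _ => ?_
      exact mul_le_mul_of_nonneg_left ((le_abs_self _).trans (hM i))
        (mul_nonneg (hppos i).le (hmnn i))
    have h4 : θ * ∑ i, (p i * m i) * x i ≤ M * (c - 1) := by
      calc θ * ∑ i, (p i * m i) * x i ≤ θ * (σ * M) :=
            mul_le_mul_of_nonneg_left h3 hθ0.le
        _ = M * (c - 1) := by rw [← mul_assoc, hθσ]; ring
    have h5 := Finset.sum_sub_distrib (f := fun i => q i * x i) (g := fun i => q' i * x i)
      (s := (Finset.univ : Finset (Fin N)))
    rw [h5] at h2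
    linarith
  have hfin := hub q' hFe' hsum'
  have hDr' : lam0 * Dr φ p q' ≤ lam0 * Dr φ p q :=
    mul_le_mul_of_nonneg_left hDr hlam0.le
  rw [obj] at hfin ⊢
  linarith

include hφpos hφconv hφdom_sub hφ1 hpsum hppos hlam0 hub hM in
lemma slope_down (q : Fin N → ℝ) (hFe : phiDiv φ q p ≠ ⊤) (hc : ∑ i, q i ≤ 1) :
    obj φ p x lam0 q ≤ Sr + M * (1 - ∑ i, q i) := by
  classical
  set c := ∑ i, q i with hc_def
  have hnet : ∀ i, φ (q i / p i) ≠ ⊤ := ne_top_each hppos hφpos hFe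
  set m : Fin N → ℝ := fun i => max (1 - q i / p i) 0 with hm
  have hmnn : ∀ i, 0 ≤ m i := fun i => le_max_right _ _
  set σ := ∑ i, p i * m i with hσdef
  have hσ1 : 1 - c ≤ σ := by
    have h1 : ∀ i, p i * (1 - q i / p i) = p i - q i := fun i => by
      rw [mul_sub, mul_div_cancel₀ _ (hppos i).ne', mul_one]
    have h2 : 1 - c = ∑ i, p i * (1 - q i / p i) := by
      rw [Finset.sum_congr rfl fun i _ => h1 i, Finset.sum_sub_distrib, hpsum, hc_def]
    rw [h2]
    exact Finset.sum_le_sum fun i _ =>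
      mul_le_mul_of_nonneg_left (le_max_left _ _) (hppos i).le
  rcases hc.eq_or_lt with h1 | h1
  · have := hub q hFe h1
    rw [h1]
    simpa using this
  have hσpos : 0 < σ := lt_of_lt_of_le (by linarith) hσ1
  set θ := (1 - c) / σ with hθdef
  have hθ0 : 0 < θ := div_pos (by linarith) hσpos
  have hθ1 : θ ≤ 1 := (div_le_one hσpos).mpr hσ1
  have hθσ : θ * σ = 1 - c := div_mul_cancel₀ _ hσpos.ne'
  set q' : Fin N → ℝ := fun i => q i + θ * (p i * m i) with hq'
  have hsum' : ∑ i, q' i = 1 := by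
    rw [hq']
    rw [Finset.sum_add_distrib, ← Finset.mul_sum, ← hσdef, ← hc_def, hθσ]
    ring
  have key : ∀ i, φ (q' i / p i) ≤ φ (q i / p i) ∧ 0 ≤ q' i := by
    intro i
    have hqnn : 0 ≤ q i := q_nonneg hφdom_sub hppos hφpos hFe i
    have hteq : q' i / p i = q i / p i + θ * m i := by
      simp only [hq']
      rw [add_div, mul_comm (p i) (m i), ← mul_assoc, mul_div_assoc,
        div_self (hppos i).ne', mul_one]
    have hq'nn : 0 ≤ q' i := by
      simp only [hq']
      have : 0 ≤ θ * (p i * m i) := mul_nonneg hθ0.le (mul_nonneg (hppos i).le (hmnn i))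
      linarith
    rcases le_or_gt 1 (q i / p i) with h | h
    · have hm0 : m i = 0 := max_eq_right (by linarith)
      exact ⟨by rw [hteq, hm0, mul_zero, add_zero], hq'nn⟩
    · have hm0 : m i = 1 - q i / p i := max_eq_left (by linarith)
      have harg : q' i / p i = (1 - θ) * (q i / p i) + θ := by rw [hteq, hm0]; ring
      exact ⟨by rw [harg]; exact phi_move hφpos hφconv hφ1 _ θ hθ0.le hθ1, hq'nn⟩
  have hnet' : ∀ i, φ (q' i / p i) ≠ ⊤ := fun i ht =>
    hnet i (top_le_iff.mp (ht ▸ (key i).1))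
  have hFe' : phiDiv φ q' p ≠ ⊤ := by
    rw [phiDiv_coe hφpos hnet']; exact EReal.coe_ne_top _
  have hDr : Dr φ p q' ≤ Dr φ p q := by
    refine Finset.sum_le_sum fun i _ => mul_le_mul_of_nonneg_left ?_ (hppos i).le
    exact EReal.toReal_le_toReal (key i).1 (phi_ne_bot hφpos _) (hnet i)
  have hip : ∑ i, q i * x i ≤ (∑ i, q' i * x i) + M * (1 - c) := by
    have h2 : ∑ i, (q' i * x i - q i * x i) = θ * ∑ i, (p i * m i) * x i := by
      rw [Finset.mul_sum]
      exact Finset.sum_congr rfl fun i _ => by rw [hq']; ring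
    have h3 : -(σ * M) ≤ ∑ i, (p i * m i) * x i := by
      have : ∑ i, (p i * m i) * (-M) ≤ ∑ i, (p i * m i) * x i := by
        refine Finset.sum_le_sum fun i _ => ?_
        exact mul_le_mul_of_nonneg_left ((abs_le.mp (hM i)).1)
          (mul_nonneg (hppos i).le (hmnn i))
      calc -(σ * M) = ∑ i, (p i * m i) * (-M) := by
            rw [hσdef, Finset.sum_mul, ← Finset.sum_neg_distrib]
            exact Finset.sum_congr rfl fun i _ => by ring
        _ ≤ _ := this
    -- handled above
    have h4 : -(M * (1 - c)) ≤ θ * ∑ i, (p i * m i) * x i := by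
      have := mul_le_mul_of_nonneg_left h3 hθ0.le
      calc -(M * (1 - c)) = θ * (-(σ * M)) := by
            rw [mul_neg, ← mul_assoc, hθσ]; ring
        _ ≤ _ := this
    have h5 := Finset.sum_sub_distrib (f := fun i => q' i * x i) (g := fun i => q i * x i)
      (s := (Finset.univ : Finset (Fin N)))
    rw [h5] at h2
    linarith
  have hfin := hub q' hFe' hsum'
  have hDr' : lam0 * Dr φ p q' ≤ lam0 * Dr φ p q :=
    mul_le_mul_of_nonneg_left hDr hlam0.le
  rw [obj] at hfin ⊢
  linarith

include hφpos hφconv hφdom_sub hφ1 hpsum hppos hlam0 hub hM in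
lemma cross (q₁ q₂ : Fin N → ℝ) (h₁ : phiDiv φ q₁ p ≠ ⊤) (h₂ : phiDiv φ q₂ p ≠ ⊤)
    (hc₁ : ∑ i, q₁ i < 1) (hc₂ : 1 < ∑ i, q₂ i) :
    (obj φ p x lam0 q₂ - Sr) / ((∑ i, q₂ i) - 1) ≤
      (Sr - obj φ p x lam0 q₁) / (1 - ∑ i, q₁ i) := by
  classical
  set c₁ := ∑ i, q₁ i with hc₁def
  set c₂ := ∑ i, q₂ i with hc₂def
  set u := (c₂ - 1) / (c₂ - c₁) with hu
  have hd : 0 < c₂ - c₁ := by linarith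
  have hu0 : 0 < u := div_pos (by linarith) hd
  have hu1 : u < 1 := (div_lt_one hd).mpr (by linarith)
  set qb : Fin N → ℝ := fun i => u * q₁ i + (1 - u) * q₂ i with hqb
  have htb : ∀ i, qb i / p i = u * (q₁ i / p i) + (1 - u) * (q₂ i / p i) := by
    intro i
    simp only [hqb]
    rw [add_div, mul_div_assoc, mul_div_assoc]
  have hφb : ∀ i, φ (qb i / p i) ≤
      (u : EReal) * φ (q₁ i / p i) + ((1 - u : ℝ) : EReal) * φ (q₂ i / p i) := by
    intro i
    rw [htb i]
    exact hφconv _ _ u hu0 hu1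
  have hnet₁ := ne_top_each hppos hφpos h₁
  have hnet₂ := ne_top_each hppos hφpos h₂
  have hkey : ∀ i, φ (qb i / p i) ≤
      (((u * (φ (q₁ i / p i)).toReal + (1 - u) * (φ (q₂ i / p i)).toReal : ℝ)) : EReal) := by
    intro i
    refine (hφb i).trans ?_
    conv_lhs => rw [phi_coe hφpos (hnet₁ i), phi_coe hφpos (hnet₂ i)]
    rw [← EReal.coe_mul, ← EReal.coe_mul, ← EReal.coe_add]
  have hnetb : ∀ i, φ (qb i / p i) ≠ ⊤ := fun i ht => by
    have hki := hkey i
    rw [ht] at hki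
    exact absurd (top_le_iff.mp hki) (EReal.coe_ne_top _)
  have hFeb : phiDiv φ qb p ≠ ⊤ := by
    rw [phiDiv_coe hφpos hnetb]; exact EReal.coe_ne_top _
  have hsumb : ∑ i, qb i = 1 := by
    simp only [hqb]
    rw [Finset.sum_add_distrib, ← Finset.mul_sum, ← Finset.mul_sum, ← hc₁def, ← hc₂def]
    rw [hu]
    field_simp
    ring
  have hDrb : Dr φ p qb ≤ u * Dr φ p q₁ + (1 - u) * Dr φ p q₂ := by
    have h6 : ∀ i, p i * (φ (qb i / p i)).toReal ≤
        p i * (u * (φ (q₁ i / p i)).toReal + (1 - u) * (φ (q₂ i / p i)).toReal) := by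
      intro i
      refine mul_le_mul_of_nonneg_left ?_ (hppos i).le
      have := EReal.toReal_le_toReal (hkey i) (phi_ne_bot hφpos _) (EReal.coe_ne_top _)
      rwa [EReal.toReal_coe] at this
    calc Dr φ p qb ≤ ∑ i, p i * (u * (φ (q₁ i / p i)).toReal + (1 - u) * (φ (q₂ i / p i)).toReal) :=
          Finset.sum_le_sum fun i _ => h6 i
      _ = u * Dr φ p q₁ + (1 - u) * Dr φ p q₂ := by
          rw [Dr, Dr, Finset.mul_sum, Finset.mul_sum, ← Finset.sum_add_distrib]
          exact Finset.sum_congr rfl fun i _ => by ring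
  have hxb : ∑ i, qb i * x i = u * ∑ i, q₁ i * x i + (1 - u) * ∑ i, q₂ i * x i := by
    rw [Finset.mul_sum, Finset.mul_sum, ← Finset.sum_add_distrib]
    exact Finset.sum_congr rfl fun i _ => by rw [hqb]; ring
  have hobjb : u * obj φ p x lam0 q₁ + (1 - u) * obj φ p x lam0 q₂ ≤ obj φ p x lam0 qb := by
    rw [obj, obj, obj, hxb]
    have := mul_le_mul_of_nonneg_left hDrb hlam0.le
    nlinarith
  have hSb := hub qb hFeb hsumb
  have hcomb : u * obj φ p x lam0 q₁ + (1 - u) * obj φ p x lam0 q₂ ≤ Sr := le_trans hobjb hSb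
  rw [div_le_div_iff₀ (by linarith) (by linarith)]
  have hscaled := mul_le_mul_of_nonneg_left hcomb hd.le
  have hu' : (c₂ - c₁) * u = c₂ - 1 := by rw [hu]; field_simp
  have h1u : (c₂ - c₁) * (1 - u) = 1 - c₁ := by rw [hu]; field_simp; ring
  have hexp : (c₂ - c₁) * (u * obj φ p x lam0 q₁ + (1 - u) * obj φ p x lam0 q₂) =
      (c₂ - 1) * obj φ p x lam0 q₁ + (1 - c₁) * obj φ p x lam0 q₂ := by
    rw [← hu', ← h1u]; ring
  rw [hexp] at hscaled
  nlinarith [hscaled]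

include hφpos hφconv hφdom_sub hφ1 hpsum hppos hlam0 hub hM in
lemma support : ∃ μ : ℝ, ∀ q : Fin N → ℝ, phiDiv φ q p ≠ ⊤ →
    obj φ p x lam0 q ≤ Sr + μ * ((∑ i, q i) - 1) := by
  classical
  set RS : Set ℝ := {r | ∃ q : Fin N → ℝ, phiDiv φ q p ≠ ⊤ ∧ 1 < ∑ i, q i ∧
    r = (obj φ p x lam0 q - Sr) / ((∑ i, q i) - 1)} with hRS
  have hRSub : ∀ r ∈ RS, r ≤ M := by
    rintro r ⟨q, hFe, hc, rfl⟩
    rw [div_le_iff₀ (by linarith)]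
    have := slope_up hφpos hφconv hφdom_sub hφ1 hpsum hppos hlam0 hub hM q hFe hc.le
    linarith
  have hbdd : BddAbove ({-M} ∪ RS) := by
    refine ⟨max M (-M), ?_⟩
    rintro r (rfl | hr)
    · exact le_max_right _ _
    · exact (hRSub r hr).trans (le_max_left _ _)
  have hne : ({-M} ∪ RS).Nonempty := ⟨-M, Or.inl rfl⟩
  set μ := sSup ({-M} ∪ RS) with hμdef
  refine ⟨μ, fun q hFe => ?_⟩
  rcases lt_trichotomy (∑ i, q i) 1 with h | h | h
  · -- mass < 1
    have hpos : 0 < 1 - ∑ i, q i := by linarith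
    have hμle : μ ≤ (Sr - obj φ p x lam0 q) / (1 - ∑ i, q i) := by
      refine csSup_le hne ?_
      rintro r (rfl | ⟨q₂, hFe₂, hc₂, rfl⟩)
      · rw [le_div_iff₀ hpos]
        have := slope_down hφpos hφconv hφdom_sub hφ1 hpsum hppos hlam0 hub hM q hFe h.le
        nlinarith
      · exact cross hφpos hφconv hφdom_sub hφ1 hpsum hppos hlam0 hub hM
          q q₂ hFe hFe₂ h hc₂
    rw [le_div_iff₀ hpos] at hμle
    nlinarith
  · have := hub q hFe h
    rw [h]
    simpa using this
  · have hmem : (obj φ p x lam0 q - Sr) / ((∑ i, q i) - 1) ∈ {-M} ∪ RS :=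
      Or.inr ⟨q, hFe, h, rfl⟩
    have := le_csSup hbdd hmem
    rw [div_le_iff₀ (by linarith)] at this
    linarith

end main
end S10


/-- for a lsc convex `φ : ℝ → [0,+∞]` with nonempty domain contained in
`[0,+∞)` and `φ(1) = 0`, `p ∈ M₁` with all `p_i > 0`, and `λ₀ > 0`, for every `x ∈ ℝ^N`:
`sup_{q ∈ M₁} (⟨q,x⟩ − λ₀ D_φ(q,p)) = min_μ (μ + λ₀ Σ_i p_i φ*((x_i − μ)/λ₀))`,
the minimum over `μ` being attained (`IsLeast` of the range of the dual objective). -/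
theorem stmt_10 {N : ℕ} (hN : 1 ≤ N) (φ : ℝ → EReal)
    (hφpos : ∀ t, 0 ≤ φ t)
    (hφlsc : LowerSemicontinuous φ)
    (hφconv : ∀ t₁ t₂ : ℝ, ∀ u : ℝ, 0 < u → u < 1 →
      φ (u * t₁ + (1 - u) * t₂) ≤ (u : EReal) * φ t₁ + ((1 - u : ℝ) : EReal) * φ t₂)
    (hφdom_ne : {t : ℝ | φ t ≠ ⊤}.Nonempty)
    (hφdom_sub : {t : ℝ | φ t ≠ ⊤} ⊆ Set.Ici (0 : ℝ))
    (hφ1 : φ 1 = 0)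
    (p : Fin N → ℝ) (hp : p ∈ stdSimplex ℝ (Fin N)) (hppos : ∀ i, 0 < p i)
    (lam0 : ℝ) (hlam0 : 0 < lam0) (x : Fin N → ℝ) :
    IsLeast
      (Set.range (fun μ : ℝ =>
        ((μ : ℝ) : EReal) + ((lam0 : ℝ) : EReal)
          * ∑ i, ((p i : ℝ) : EReal) * fconj φ ((x i - μ) / lam0)))
      (⨆ q ∈ stdSimplex ℝ (Fin N),
        (((∑ i, q i * x i : ℝ)) : EReal) - ((lam0 : ℝ) : EReal) * phiDiv φ q p) := by
  classical
  obtain ⟨hpnn, hpsum⟩ := hp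
  haveI : Nonempty (Fin N) := ⟨⟨0, hN⟩⟩
  set M : ℝ := Finset.univ.sup' Finset.univ_nonempty (fun i => |x i|) with hM_def
  have hM : ∀ i, |x i| ≤ M := fun i => by
    rw [hM_def]
    exact Finset.le_sup' (fun j => |x j|) (Finset.mem_univ i)
  set O : Set ℝ := {r | ∃ q : Fin N → ℝ, phiDiv φ q p ≠ ⊤ ∧ (∑ i, q i) = 1 ∧
    S10.obj φ p x lam0 q = r} with hO
  have hdivp : ∀ i : Fin N, p i / p i = 1 := fun i => div_self (hppos i).ne'
  have hFep : phiDiv φ p p ≠ ⊤ := by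
    have h0 : phiDiv φ p p = 0 := by
      rw [phiDiv]
      refine Finset.sum_eq_zero fun i _ => ?_
      rw [hdivp i, hφ1, mul_zero]
    rw [h0]
    simp
  have hDrp : S10.Dr φ p p = 0 := Finset.sum_eq_zero fun i _ => by
    rw [hdivp i, hφ1, EReal.toReal_zero, mul_zero]
  have hOne : O.Nonempty := ⟨S10.obj φ p x lam0 p, p, hFep, hpsum, rfl⟩
  have hOub : ∀ r ∈ O, r ≤ M := by
    rintro r ⟨q, hFe, hq1, rfl⟩
    have hqnn := fun i => S10.q_nonneg hφdom_sub hppos hφpos hFe i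
    have h1 : ∑ i, q i * x i ≤ ∑ i, q i * M := Finset.sum_le_sum fun i _ =>
      mul_le_mul_of_nonneg_left ((le_abs_self _).trans (hM i)) (hqnn i)
    have h2 : ∑ i, q i * M = M := by rw [← Finset.sum_mul, hq1, one_mul]
    have h3 : 0 ≤ lam0 * S10.Dr φ p q :=
      mul_nonneg hlam0.le (S10.Dr_nonneg hφpos hppos)
    rw [S10.obj]
    linarith
  have hObdd : BddAbove O := ⟨M, hOub⟩
  set Sr := sSup O with hSrdef
  have hub : ∀ q : Fin N → ℝ, phiDiv φ q p ≠ ⊤ → ∑ i, q i = 1 →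
      S10.obj φ p x lam0 q ≤ Sr := fun q h1 h2 => le_csSup hObdd ⟨q, h1, h2, rfl⟩
  -- rewrite the primal supremum as a real number
  have hOb_fe : ∀ q : Fin N → ℝ, phiDiv φ q p ≠ ⊤ →
      ((∑ i, q i * x i : ℝ) : EReal) - ((lam0 : ℝ) : EReal) * phiDiv φ q p
        = ((S10.obj φ p x lam0 q : ℝ) : EReal) := by
    intro q h
    rw [S10.phiDiv_coe hφpos (S10.ne_top_each hppos hφpos h), ← EReal.coe_mul,
      ← EReal.coe_sub]
    rfl
  have hSup_le : (⨆ q ∈ stdSimplex ℝ (Fin N),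
      (((∑ i, q i * x i : ℝ)) : EReal) - ((lam0 : ℝ) : EReal) * phiDiv φ q p)
        ≤ ((Sr : ℝ) : EReal) := by
    refine iSup₂_le fun q hq => ?_
    rcases eq_or_ne (phiDiv φ q p) ⊤ with h | h
    · rw [h, EReal.coe_mul_top_of_pos hlam0, EReal.sub_top]
      exact bot_le
    · rw [hOb_fe q h]
      exact EReal.coe_le_coe_iff.mpr (hub q h hq.2)
  have hleSup : ((S10.obj φ p x lam0 p : ℝ) : EReal) ≤
      ⨆ q ∈ stdSimplex ℝ (Fin N),
        (((∑ i, q i * x i : ℝ)) : EReal) - ((lam0 : ℝ) : EReal) * phiDiv φ q p := by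
    rw [← hOb_fe p hFep]
    exact le_iSup₂ (f := fun q (_ : q ∈ stdSimplex ℝ (Fin N)) =>
      (((∑ i, q i * x i : ℝ)) : EReal) - ((lam0 : ℝ) : EReal) * phiDiv φ q p) p ⟨hpnn, hpsum⟩
  have hSup_eq : (⨆ q ∈ stdSimplex ℝ (Fin N),
      (((∑ i, q i * x i : ℝ)) : EReal) - ((lam0 : ℝ) : EReal) * phiDiv φ q p)
        = ((Sr : ℝ) : EReal) := by
    refine le_antisymm hSup_le ?_
    have hne_top : (⨆ q ∈ stdSimplex ℝ (Fin N),
        (((∑ i, q i * x i : ℝ)) : EReal) - ((lam0 : ℝ) : EReal) * phiDiv φ q p) ≠ ⊤ :=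
      ne_top_of_le_ne_top (EReal.coe_ne_top Sr) hSup_le
    have hne_bot : (⨆ q ∈ stdSimplex ℝ (Fin N),
        (((∑ i, q i * x i : ℝ)) : EReal) - ((lam0 : ℝ) : EReal) * phiDiv φ q p) ≠ ⊥ :=
      (lt_of_lt_of_le (EReal.bot_lt_coe _) hleSup).ne'
    have hs0 := (EReal.coe_toReal hne_top hne_bot).symm
    rw [hs0, EReal.coe_le_coe_iff]
    refine csSup_le hOne ?_
    rintro r ⟨q, hFe, hq1, rfl⟩
    have hqmem : q ∈ stdSimplex ℝ (Fin N) :=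
      ⟨fun i => S10.q_nonneg hφdom_sub hppos hφpos hFe i, hq1⟩
    have hle : ((S10.obj φ p x lam0 q : ℝ) : EReal) ≤
        ⨆ q ∈ stdSimplex ℝ (Fin N),
          (((∑ i, q i * x i : ℝ)) : EReal) - ((lam0 : ℝ) : EReal) * phiDiv φ q p := by
      rw [← hOb_fe q hFe]
      exact le_iSup₂ (f := fun q (_ : q ∈ stdSimplex ℝ (Fin N)) =>
        (((∑ i, q i * x i : ℝ)) : EReal) - ((lam0 : ℝ) : EReal) * phiDiv φ q p) q hqmem
    rw [hs0, EReal.coe_le_coe_iff] at hle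
    exact hle
  -- weak duality
  have hweak : ∀ μ : ℝ, ((Sr : ℝ) : EReal) ≤ ((μ : ℝ) : EReal) + ((lam0 : ℝ) : EReal)
      * ∑ i, ((p i : ℝ) : EReal) * fconj φ ((x i - μ) / lam0) := by
    intro μ
    have key : ∀ q : Fin N → ℝ, phiDiv φ q p ≠ ⊤ → (∑ i, q i) = 1 →
        ((S10.obj φ p x lam0 q : ℝ) : EReal) ≤ ((μ : ℝ) : EReal) + ((lam0 : ℝ) : EReal)
          * ∑ i, ((p i : ℝ) : EReal) * fconj φ ((x i - μ) / lam0) := by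
      intro q hFe hq1
      have hnet := S10.ne_top_each hppos hφpos hFe
      set c : Fin N → ℝ := fun i =>
        p i * (((x i - μ) / lam0) * (q i / p i) - (φ (q i / p i)).toReal) with hc
      have hterm : ∀ i, ((c i : ℝ) : EReal) ≤
          ((p i : ℝ) : EReal) * fconj φ ((x i - μ) / lam0) := by
        intro i
        have h1 : ((((x i - μ) / lam0) * (q i / p i) : ℝ) : EReal) - φ (q i / p i)
            ≤ fconj φ ((x i - μ) / lam0) :=
          le_iSup (fun t => ((((x i - μ) / lam0) * t : ℝ) : EReal) - φ t) (q i / p i)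
        rw [S10.phi_coe hφpos (hnet i), ← EReal.coe_sub] at h1
        calc ((c i : ℝ) : EReal)
            = ((p i : ℝ) : EReal) * ((((x i - μ) / lam0) * (q i / p i)
                - (φ (q i / p i)).toReal : ℝ) : EReal) := by
              rw [← EReal.coe_mul]
          _ ≤ _ := mul_le_mul_of_nonneg_left h1 (by exact_mod_cast (hppos i).le)
      have hsum2 : ((∑ i, c i : ℝ) : EReal) ≤
          ∑ i, ((p i : ℝ) : EReal) * fconj φ ((x i - μ) / lam0) := by
        rw [S10.coe_sum]
        exact Finset.sum_le_sum fun i _ => hterm i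
      have hmul : ((lam0 * ∑ i, c i : ℝ) : EReal) ≤ ((lam0 : ℝ) : EReal)
          * ∑ i, ((p i : ℝ) : EReal) * fconj φ ((x i - μ) / lam0) := by
        rw [EReal.coe_mul]
        exact mul_le_mul_of_nonneg_left hsum2 (by exact_mod_cast hlam0.le)
      have hci : ∀ i, lam0 * c i
          = q i * x i - μ * q i - lam0 * (p i * (φ (q i / p i)).toReal) := by
        intro i
        have e1 : lam0 * c i = ((x i - μ) / lam0 * lam0) * (q i / p i * p i)
            - lam0 * (p i * (φ (q i / p i)).toReal) := by
          simp only [hc]; ring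
        rw [e1, div_mul_cancel₀ _ hlam0.ne', div_mul_cancel₀ _ (hppos i).ne']
        ring
      have hsplit : ∑ i, (q i * x i - μ * q i - lam0 * (p i * (φ (q i / p i)).toReal))
          = (∑ i, q i * x i) - μ * (∑ i, q i) - lam0 * S10.Dr φ p q := by
        rw [Finset.sum_sub_distrib, Finset.sum_sub_distrib, ← Finset.mul_sum,
          ← Finset.mul_sum, S10.Dr]
      have hobj_eq : S10.obj φ p x lam0 q = μ + lam0 * ∑ i, c i := by
        have h5 : lam0 * ∑ i, c i
            = ∑ i, (q i * x i - μ * q i - lam0 * (p i * (φ (q i / p i)).toReal)) := by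
          rw [Finset.mul_sum]
          exact Finset.sum_congr rfl fun i _ => hci i
        rw [S10.obj, h5, hsplit, hq1]
        ring
      calc ((S10.obj φ p x lam0 q : ℝ) : EReal)
          = ((μ : ℝ) : EReal) + ((lam0 * ∑ i, c i : ℝ) : EReal) := by
            rw [hobj_eq, EReal.coe_add]
        _ ≤ _ := add_le_add_right hmul _
    rcases eq_or_ne (((μ : ℝ) : EReal) + ((lam0 : ℝ) : EReal)
        * ∑ i, ((p i : ℝ) : EReal) * fconj φ ((x i - μ) / lam0)) ⊤ with h | h
    · rw [h]; exact le_top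
    · have hbot := key p hFep hpsum
      have hnb : ((μ : ℝ) : EReal) + ((lam0 : ℝ) : EReal)
          * ∑ i, ((p i : ℝ) : EReal) * fconj φ ((x i - μ) / lam0) ≠ ⊥ := by
        intro hb
        rw [hb] at hbot
        exact absurd (le_bot_iff.mp hbot) (EReal.coe_ne_bot _)
      have hd := (EReal.coe_toReal h hnb).symm
      rw [hd, EReal.coe_le_coe_iff]
      refine csSup_le hOne ?_
      rintro r ⟨q, hFe, hq1, rfl⟩
      have := key q hFe hq1
      rw [hd, EReal.coe_le_coe_iff] at this
      exact this
  -- supporting line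
  obtain ⟨μs, hμs⟩ := S10.support hφpos hφconv hφdom_sub hφ1 hpsum hppos hlam0 hub hM
  -- per-coordinate finiteness of the conjugates at μs
  have hB : ∀ i : Fin N, fconj φ ((x i - μs) / lam0) ≤
      ((((Sr - ∑ j, p j * x j) / p i + (x i - μs)) / lam0 : ℝ) : EReal) := by
    intro i
    simp only [fconj]
    refine iSup_le fun t => ?_
    rcases eq_or_ne (φ t) ⊤ with h | h
    · rw [h, EReal.sub_top]
      exact bot_le
    · have ht0 : 0 ≤ t := hφdom_sub h
      set r := (φ t).toReal with hrdef
      set qq : Fin N → ℝ := Function.update p i (p i * t) with hqq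
      have hqqi : qq i = p i * t := by rw [hqq, Function.update_self]
      have hqqj : ∀ j ≠ i, qq j = p j := fun j hj => by rw [hqq, Function.update_of_ne hj]
      have hti : qq i / p i = t := by
        rw [hqqi, mul_comm, mul_div_assoc, div_self (hppos i).ne', mul_one]
      have hdiv : ∀ j, φ (qq j / p j) ≠ ⊤ := by
        intro j
        by_cases hj : j = i
        · subst hj; rw [hti]; exact h
        · rw [hqqj j hj, div_self (hppos j).ne', hφ1]; simp
      have hFeq : phiDiv φ qq p ≠ ⊤ := by
        rw [S10.phiDiv_coe hφpos hdiv]; exact EReal.coe_ne_top _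
      have hsum1 : (∑ j, qq j) - 1 = p i * t - p i := by
        rw [← hpsum, ← Finset.sum_sub_distrib,
          Finset.sum_eq_single_of_mem i (Finset.mem_univ i)
            (fun j _ hj => by rw [hqqj j hj, sub_self]), hqqi]
      have hx1 : ∑ j, qq j * x j = (∑ j, p j * x j) + (p i * t - p i) * x i := by
        have h6 : ∑ j, (qq j * x j - p j * x j) = (p i * t - p i) * x i := by
          rw [Finset.sum_eq_single_of_mem i (Finset.mem_univ i)
            (fun j _ hj => by rw [hqqj j hj, sub_self]), hqqi]
          ring
        rw [Finset.sum_sub_distrib] at h6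
        linarith
      have hDrq : S10.Dr φ p qq = p i * r := by
        rw [S10.Dr, Finset.sum_eq_single_of_mem i (Finset.mem_univ i)
          (fun j _ hj => by
            rw [hqqj j hj, div_self (hppos j).ne', hφ1, EReal.toReal_zero, mul_zero]),
          hti]
      have hsup := hμs qq hFeq
      rw [S10.obj, hx1, hDrq, hsum1] at hsup
      have e2 : p i * (t * (x i - μs) - lam0 * r)
          ≤ Sr - (∑ j, p j * x j) + p i * (x i - μs) := by nlinarith [hsup]
      have e3 : t * (x i - μs) - lam0 * r
          ≤ (Sr - (∑ j, p j * x j) + p i * (x i - μs)) / p i :=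
        (le_div_iff₀ (hppos i)).mpr (by nlinarith [e2])
      have e4 : (Sr - (∑ j, p j * x j) + p i * (x i - μs)) / p i
          = (Sr - ∑ j, p j * x j) / p i + (x i - μs) := by
        rw [add_div, mul_div_cancel_left₀ _ (hppos i).ne']
      have e5 : (x i - μs) / lam0 * t - r
          ≤ ((Sr - ∑ j, p j * x j) / p i + (x i - μs)) / lam0 := by
        rw [le_div_iff₀ hlam0]
        have e6 : ((x i - μs) / lam0 * t - r) * lam0 = t * (x i - μs) - lam0 * r := by
          field_simp
        rw [e6, ← e4]
        exact e3
      rw [S10.phi_coe hφpos h, ← hrdef, ← EReal.coe_sub]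
      exact EReal.coe_le_coe_iff.mpr e5
  have hlb : ∀ i : Fin N, (((x i - μs) / lam0 : ℝ) : EReal) ≤ fconj φ ((x i - μs) / lam0) := by
    intro i
    have h1 : ((((x i - μs) / lam0) * 1 : ℝ) : EReal) - φ 1 ≤ fconj φ ((x i - μs) / lam0) :=
      le_iSup (fun t => ((((x i - μs) / lam0) * t : ℝ) : EReal) - φ t) 1
    rw [hφ1, mul_one] at h1
    simpa using h1
  have hfc : ∀ i : Fin N, ∃ a : ℝ, fconj φ ((x i - μs) / lam0) = (a : EReal) := fun i =>
    ⟨(fconj φ ((x i - μs) / lam0)).toReal,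
      (EReal.coe_toReal (ne_top_of_le_ne_top (EReal.coe_ne_top _) (hB i))
        (lt_of_lt_of_le (EReal.bot_lt_coe _) (hlb i)).ne').symm⟩
  choose a ha using hfc
  have hsum_a : ∑ i, p i * a i ≤ (Sr - μs) / lam0 := by
    refine le_of_forall_pos_le_add fun ε hε => ?_
    have hex : ∀ i : Fin N, ∃ t : ℝ, φ t ≠ ⊤ ∧
        a i - ε < ((x i - μs) / lam0) * t - (φ t).toReal := by
      intro i
      have h1 : ((a i - ε : ℝ) : EReal) < fconj φ ((x i - μs) / lam0) := by
        rw [ha i]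
        exact_mod_cast (by linarith : a i - ε < a i)
      rw [fconj, lt_iSup_iff] at h1
      obtain ⟨t, ht⟩ := h1
      have hne : φ t ≠ ⊤ := by
        intro hh
        rw [hh, EReal.sub_top] at ht
        exact absurd ht (by simp)
      refine ⟨t, hne, ?_⟩
      rw [S10.phi_coe hφpos hne, ← EReal.coe_sub] at ht
      exact_mod_cast ht
    choose t ht1 ht2 using hex
    set qq : Fin N → ℝ := fun i => p i * t i with hqq
    have hdiv : ∀ i, qq i / p i = t i := fun i => by
      simp only [hqq]
      rw [mul_comm, mul_div_assoc, div_self (hppos i).ne', mul_one]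
    have hFeq : phiDiv φ qq p ≠ ⊤ := by
      rw [S10.phiDiv_coe hφpos (fun i => by rw [hdiv i]; exact ht1 i)]
      exact EReal.coe_ne_top _
    have hsup := hμs qq hFeq
    have hDrq : S10.Dr φ p qq = ∑ i, p i * (φ (t i)).toReal :=
      Finset.sum_congr rfl fun i _ => by rw [hdiv i]
    have hterm : ∀ i, p i * (((x i - μs) / lam0) * t i - (φ (t i)).toReal)
        = (qq i * x i - μs * qq i - lam0 * (p i * (φ (t i)).toReal)) / lam0 := by
      intro i
      simp only [hqq]
      field_simp
    have hexp : ∑ i, (qq i * x i - μs * qq i - lam0 * (p i * (φ (t i)).toReal))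
        = S10.obj φ p x lam0 qq - μs * ∑ i, qq i := by
      rw [S10.obj, hDrq, Finset.sum_sub_distrib, Finset.sum_sub_distrib,
        ← Finset.mul_sum, ← Finset.mul_sum]
      ring
    have hkey : ∑ i, p i * (((x i - μs) / lam0) * t i - (φ (t i)).toReal)
        ≤ (Sr - μs) / lam0 := by
      rw [Finset.sum_congr rfl fun i _ => hterm i, ← Finset.sum_div, hexp]
      have h7 : S10.obj φ p x lam0 qq - μs * ∑ i, qq i ≤ Sr - μs := by nlinarith [hsup]
      exact div_le_div_of_nonneg_right h7 hlam0.le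
    have h2 : ∑ i, p i * (a i - ε) ≤
        ∑ i, p i * (((x i - μs) / lam0) * t i - (φ (t i)).toReal) :=
      Finset.sum_le_sum fun i _ => mul_le_mul_of_nonneg_left (ht2 i).le (hppos i).le
    have h3 : ∑ i, p i * (a i - ε) = (∑ i, p i * a i) - ε := by
      rw [Finset.sum_congr rfl (fun i _ => by ring :
        ∀ i ∈ Finset.univ, p i * (a i - ε) = p i * a i - ε * p i),
        Finset.sum_sub_distrib, ← Finset.mul_sum, hpsum, mul_one]
    linarith
  have hdual : ((μs : ℝ) : EReal) + ((lam0 : ℝ) : EReal)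
      * ∑ i, ((p i : ℝ) : EReal) * fconj φ ((x i - μs) / lam0) ≤ ((Sr : ℝ) : EReal) := by
    have hTc : ∑ i, ((p i : ℝ) : EReal) * fconj φ ((x i - μs) / lam0)
        = ((∑ i, p i * a i : ℝ) : EReal) := by
      rw [S10.coe_sum]
      exact Finset.sum_congr rfl fun i _ => by rw [ha i, ← EReal.coe_mul]
    rw [hTc, ← EReal.coe_mul, ← EReal.coe_add, EReal.coe_le_coe_iff]
    have h8 : lam0 * ((Sr - μs) / lam0) = Sr - μs := by field_simp
    nlinarith [mul_le_mul_of_nonneg_left hsum_a hlam0.le]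
  rw [hSup_eq]
  constructor
  · refine ⟨μs, ?_⟩
    show ((μs : ℝ) : EReal) + ((lam0 : ℝ) : EReal)
        * ∑ i, ((p i : ℝ) : EReal) * fconj φ ((x i - μs) / lam0) = ((Sr : ℝ) : EReal)
    exact le_antisymm hdual (hweak μs)
  · rintro y ⟨μ, rfl⟩
    exact hweak μ
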